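/- For every real 4×4 matrix S with Sᵀ·C·S = C (i.e. S ∈ Sp(4,ℝ) relative to C): S is invertible; S⁻¹·Γⱼ·S = Σᵢ O(S)ᵢⱼ·Γᵢ for j = 1,…,5, where O(S)ᵢⱼ = (1/4)·Tr(Γᵢᵀ·S⁻¹·Γⱼ·S); and O(S)ᵀ·η₅·O(S) = η₅. Thus conjugation by a symplectic matrix preserves the real span of Γ₁,…,Γ₅ and the resulting 5×5 coefficient matrix O(S) is orthogonal with respect to the nondegenerate symmetric form η₅ of signature (3,2), realizing the covering map from Sp(4,ℝ) onto a subgroup of the η₅-orthogonal group O(2,3). -/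

import Mathlib

open Matrix

/-- The five gamma matrices `Γ₁ = √2·(E₁₄ − E₂₃)`, `Γ₂ = √2·(E₁₂ + E₄₃)`,
`Γ₃ = diag(1,−1,1,−1)`, `Γ₄ = √2·(E₂₁ + E₃₄)`, `Γ₅ = √2·(E₄₁ − E₃₂)`.
They satisfy the normalization `(1/4)·Tr(Γᵢᵀ·Γⱼ) = δᵢⱼ`. -/
noncomputable def GammaMat : Fin 5 → Matrix (Fin 4) (Fin 4) ℝ :=
  ![!![0, 0, 0, Real.sqrt 2; 0, 0, -Real.sqrt 2, 0; 0, 0, 0, 0; 0, 0, 0, 0],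
    !![0, Real.sqrt 2, 0, 0; 0, 0, 0, 0; 0, 0, 0, 0; 0, 0, Real.sqrt 2, 0],
    !![1, 0, 0, 0; 0, -1, 0, 0; 0, 0, 1, 0; 0, 0, 0, -1],
    !![0, 0, 0, 0; Real.sqrt 2, 0, 0, 0; 0, 0, 0, Real.sqrt 2; 0, 0, 0, 0],
    !![0, 0, 0, 0; 0, 0, 0, 0; 0, -Real.sqrt 2, 0, 0; Real.sqrt 2, 0, 0, 0]]

/-- The `5×5` matrix `η₅` with `(η₅)ᵢⱼ = 1` iff `i + j = 6` (anti-diagonal). -/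
def eta5Mat : Matrix (Fin 5) (Fin 5) ℝ :=
  !![0, 0, 0, 0, 1; 0, 0, 0, 1, 0; 0, 0, 1, 0, 0; 0, 1, 0, 0, 0; 1, 0, 0, 0, 0]

/-- The skew-symmetric charge conjugation matrix `C = [[0, I₂], [−I₂, 0]]`. -/
def Cmat : Matrix (Fin 4) (Fin 4) ℝ :=
  !![0, 0, 1, 0; 0, 0, 0, 1; -1, 0, 0, 0; 0, -1, 0, 0]

/-- The vector image `O(S)ᵢⱼ = (1/4)·Tr(Γᵢᵀ·S⁻¹·Γⱼ·S)` of a symplectic matrix `S`. -/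
noncomputable def Omat5 (S : Matrix (Fin 4) (Fin 4) ℝ) : Matrix (Fin 5) (Fin 5) ℝ :=
  Matrix.of fun i j => (1 / 4 : ℝ) * ((GammaMat i)ᵀ * S⁻¹ * GammaMat j * S).trace

lemma CC_eq : Cmat * Cmat = -1 := by
  ext i j
  fin_cases i <;> fin_cases j <;>
    simp [Cmat, Matrix.mul_apply, Fin.sum_univ_four, Matrix.neg_apply, Matrix.one_apply,
      Matrix.vecHead, Matrix.vecTail]

set_option maxHeartbeats 1000000 in
lemma gskew (j : Fin 5) : (Cmat * GammaMat j)ᵀ = -(Cmat * GammaMat j) := by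
  have g0 : GammaMat 0 = !![0, 0, 0, Real.sqrt 2; 0, 0, -Real.sqrt 2, 0; 0, 0, 0, 0; 0, 0, 0, 0] := rfl
  have g1 : GammaMat 1 = !![0, Real.sqrt 2, 0, 0; 0, 0, 0, 0; 0, 0, 0, 0; 0, 0, Real.sqrt 2, 0] := rfl
  have g2 : GammaMat 2 = !![1, 0, 0, 0; 0, -1, 0, 0; 0, 0, 1, 0; 0, 0, 0, -1] := rfl
  have g3 : GammaMat 3 = !![0, 0, 0, 0; Real.sqrt 2, 0, 0, 0; 0, 0, 0, Real.sqrt 2; 0, 0, 0, 0] := rfl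
  have g4 : GammaMat 4 = !![0, 0, 0, 0; 0, 0, 0, 0; 0, -Real.sqrt 2, 0, 0; Real.sqrt 2, 0, 0, 0] := rfl
  fin_cases j
  · rw [show (⟨0, by norm_num⟩ : Fin 5) = 0 from rfl, g0]
    ext i k
    fin_cases i <;> fin_cases k <;>
      simp [Cmat, Matrix.mul_apply, Fin.sum_univ_four, Matrix.neg_apply,
        Matrix.transpose_apply, Matrix.vecHead, Matrix.vecTail]
  · rw [show (⟨1, by norm_num⟩ : Fin 5) = 1 from rfl, g1]
    ext i k
    fin_cases i <;> fin_cases k <;>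
      simp [Cmat, Matrix.mul_apply, Fin.sum_univ_four, Matrix.neg_apply,
        Matrix.transpose_apply, Matrix.vecHead, Matrix.vecTail]
  · rw [show (⟨2, by norm_num⟩ : Fin 5) = 2 from rfl, g2]
    ext i k
    fin_cases i <;> fin_cases k <;>
      simp [Cmat, Matrix.mul_apply, Fin.sum_univ_four, Matrix.neg_apply,
        Matrix.transpose_apply, Matrix.vecHead, Matrix.vecTail]
  · rw [show (⟨3, by norm_num⟩ : Fin 5) = 3 from rfl, g3]
    ext i k
    fin_cases i <;> fin_cases k <;>
      simp [Cmat, Matrix.mul_apply, Fin.sum_univ_four, Matrix.neg_apply,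
        Matrix.transpose_apply, Matrix.vecHead, Matrix.vecTail]
  · rw [show (⟨4, by norm_num⟩ : Fin 5) = 4 from rfl, g4]
    ext i k
    fin_cases i <;> fin_cases k <;>
      simp [Cmat, Matrix.mul_apply, Fin.sum_univ_four, Matrix.neg_apply,
        Matrix.transpose_apply, Matrix.vecHead, Matrix.vecTail]

lemma gtrace (j : Fin 5) : (GammaMat j).trace = 0 := by
  fin_cases j <;>
    simp [GammaMat, Matrix.trace, Fin.sum_univ_four, Matrix.diag, Matrix.vecHead, Matrix.vecTail]

set_option maxHeartbeats 1000000 in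
lemma gtr (i j : Fin 5) : (GammaMat i * GammaMat j).trace = 4 * eta5Mat i j := by
  have h2 : Real.sqrt 2 * Real.sqrt 2 = 2 := Real.mul_self_sqrt (by norm_num)
  fin_cases i <;> fin_cases j <;>
    simp [GammaMat, eta5Mat, Matrix.trace, Matrix.diag, Matrix.mul_apply, Fin.sum_univ_four,
      Matrix.vecHead, Matrix.vecTail, h2] <;> norm_num

set_option maxHeartbeats 2000000 in
lemma decomp5 (M : Matrix (Fin 4) (Fin 4) ℝ) (h1 : (Cmat * M)ᵀ = -(Cmat * M))
    (h2 : M.trace = 0) :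
    M = ∑ i : Fin 5, ((1/4) * ((GammaMat i)ᵀ * M).trace) • GammaMat i := by
  have hs : Real.sqrt 2 * Real.sqrt 2 = 2 := Real.mul_self_sqrt (by norm_num)
  have cm : ∀ i j, (Cmat * M) i j
      = Cmat i 0 * M 0 j + Cmat i 1 * M 1 j + Cmat i 2 * M 2 j + Cmat i 3 * M 3 j := by
    intro i j; rw [Matrix.mul_apply, Fin.sum_univ_four]
  have e : ∀ i j, (Cmat * M) j i = -((Cmat * M) i j) := by
    intro i j
    have := congrFun (congrFun h1 i) j
    rwa [Matrix.transpose_apply, Matrix.neg_apply] at this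
  have e00 := e 0 0; have e01 := e 0 1; have e02 := e 0 2; have e03 := e 0 3
  have e11 := e 1 1; have e12 := e 1 2; have e13 := e 1 3
  have e22 := e 2 2; have e23 := e 2 3; have e33 := e 3 3
  simp only [cm] at e00 e01 e02 e03 e11 e12 e13 e22 e23 e33
  simp only [Cmat, Matrix.cons_val_zero, Matrix.cons_val_one, Matrix.head_cons,
    Matrix.cons_val', Matrix.cons_val_fin_one, Matrix.empty_val',
    Matrix.vecHead, Matrix.vecTail, Matrix.head_fin_const, Function.comp_apply,
    Fin.succ] at e00 e01 e02 e03 e11 e12 e13 e22 e23 e33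
  simp at e00 e01 e02 e03 e11 e12 e13 e22 e23 e33
  simp only [Matrix.trace, Matrix.diag, Fin.sum_univ_four] at h2
  have tg : ∀ (A : Matrix (Fin 4) (Fin 4) ℝ), (Aᵀ * M).trace
      = A 0 0 * M 0 0 + A 1 0 * M 1 0 + A 2 0 * M 2 0 + A 3 0 * M 3 0
      + (A 0 1 * M 0 1 + A 1 1 * M 1 1 + A 2 1 * M 2 1 + A 3 1 * M 3 1)
      + (A 0 2 * M 0 2 + A 1 2 * M 1 2 + A 2 2 * M 2 2 + A 3 2 * M 3 2)
      + (A 0 3 * M 0 3 + A 1 3 * M 1 3 + A 2 3 * M 2 3 + A 3 3 * M 3 3) := by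
    intro A
    simp [Matrix.trace, Matrix.diag, Matrix.mul_apply, Matrix.transpose_apply,
      Fin.sum_univ_four]
    try ring
  have t0 : ((GammaMat 0)ᵀ * M).trace = Real.sqrt 2 * (M 0 3 - M 1 2) := by
    rw [tg]; simp [GammaMat, Matrix.vecHead, Matrix.vecTail]; try ring
  have t1 : ((GammaMat 1)ᵀ * M).trace = Real.sqrt 2 * (M 0 1 + M 3 2) := by
    rw [tg]; simp [GammaMat, Matrix.vecHead, Matrix.vecTail]; try ring
  have t2 : ((GammaMat 2)ᵀ * M).trace = M 0 0 - M 1 1 + M 2 2 - M 3 3 := by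
    rw [tg]; simp [GammaMat, Matrix.vecHead, Matrix.vecTail]; try ring
  have t3 : ((GammaMat 3)ᵀ * M).trace = Real.sqrt 2 * (M 1 0 + M 2 3) := by
    rw [tg]; simp [GammaMat, Matrix.vecHead, Matrix.vecTail]; try ring
  have t4 : ((GammaMat 4)ᵀ * M).trace = Real.sqrt 2 * (M 3 0 - M 2 1) := by
    rw [tg]; simp [GammaMat, Matrix.vecHead, Matrix.vecTail]; try ring
  rw [Fin.sum_univ_five, t0, t1, t2, t3, t4]
  ext i j
  fin_cases i <;> fin_cases j <;>
  · simp [GammaMat, Matrix.smul_apply, Matrix.add_apply, Matrix.vecHead, Matrix.vecTail]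
    ring_nf
    try simp only [Real.sq_sqrt (by norm_num : (0:ℝ) ≤ 2), hs]
    linarith [e00, e01, e02, e03, e11, e12, e13, e22, e23, e33, h2]

/-- **The spinor-to-vector covering map `Sp(4,ℝ) → SO(2,3)`.**
If `Sᵀ·C·S = C` then `S` is invertible, conjugation by `S` preserves the span of the `Γᵢ`
with coefficient matrix `O(S)`, and `O(S)ᵀ·η₅·O(S) = η₅`. -/
theorem stmt_5 (S : Matrix (Fin 4) (Fin 4) ℝ) (hS : Sᵀ * Cmat * S = Cmat) :
    IsUnit S ∧
    (∀ j : Fin 5, S⁻¹ * GammaMat j * S = ∑ i : Fin 5, Omat5 S i j • GammaMat i) ∧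
    (Omat5 S)ᵀ * eta5Mat * Omat5 S = eta5Mat := by
  have hL : (-(Cmat * Sᵀ * Cmat)) * S = 1 := by
    calc (-(Cmat * Sᵀ * Cmat)) * S = -(Cmat * (Sᵀ * Cmat * S)) := by noncomm_ring
      _ = 1 := by rw [hS, CC_eq]; simp
  have hR : S * (-(Cmat * Sᵀ * Cmat)) = 1 := mul_eq_one_comm.mp hL
  have hU : IsUnit S := IsUnit.of_mul_eq_one_right _ hL
  have hinv : S⁻¹ = -(Cmat * Sᵀ * Cmat) := Matrix.inv_eq_left_inv hL
  have hSSi : S * S⁻¹ = 1 := by rw [hinv]; exact hR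
  have hSiS : S⁻¹ * S = 1 := by rw [hinv]; exact hL
  -- part 2
  have conj : ∀ j : Fin 5,
      S⁻¹ * GammaMat j * S = ∑ i : Fin 5, Omat5 S i j • GammaMat i := by
    intro j
    have h1 : Cmat * (S⁻¹ * GammaMat j * S) = Sᵀ * (Cmat * GammaMat j) * S := by
      rw [hinv]
      calc Cmat * (-(Cmat * Sᵀ * Cmat) * GammaMat j * S)
          = (-(Cmat * Cmat)) * (Sᵀ * (Cmat * GammaMat j) * S) := by noncomm_ring
        _ = Sᵀ * (Cmat * GammaMat j) * S := by rw [CC_eq]; simp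
    have hskew : (Cmat * (S⁻¹ * GammaMat j * S))ᵀ = -(Cmat * (S⁻¹ * GammaMat j * S)) := by
      rw [h1, Matrix.transpose_mul, Matrix.transpose_mul, Matrix.transpose_transpose,
        gskew j]
      noncomm_ring
    have htr : (S⁻¹ * GammaMat j * S).trace = 0 := by
      rw [Matrix.trace_mul_comm, ← Matrix.mul_assoc, hSSi, Matrix.one_mul, gtrace]
    have := decomp5 _ hskew htr
    rw [this]
    refine Finset.sum_congr rfl fun i _ => ?_
    congr 1
    simp only [Omat5, Matrix.of_apply, Matrix.mul_assoc]
  refine ⟨hU, conj, ?_⟩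
  -- part 3
  have key : ∀ a b : Fin 5, (4:ℝ) * eta5Mat a b
      = ∑ k : Fin 5, ∑ l : Fin 5, Omat5 S k a * Omat5 S l b * (4 * eta5Mat k l) := by
    intro a b
    have hprod : (S⁻¹ * GammaMat a * S) * (S⁻¹ * GammaMat b * S)
        = S⁻¹ * (GammaMat a * GammaMat b) * S := by
      calc (S⁻¹ * GammaMat a * S) * (S⁻¹ * GammaMat b * S)
          = S⁻¹ * GammaMat a * (S * S⁻¹) * GammaMat b * S := by noncomm_ring
        _ = S⁻¹ * (GammaMat a * GammaMat b) * S := by rw [hSSi]; noncomm_ring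
    have htr2 : ((S⁻¹ * GammaMat a * S) * (S⁻¹ * GammaMat b * S)).trace
        = (GammaMat a * GammaMat b).trace := by
      rw [hprod, Matrix.trace_mul_comm, ← Matrix.mul_assoc, hSSi, Matrix.one_mul]
    calc (4:ℝ) * eta5Mat a b = (GammaMat a * GammaMat b).trace := (gtr a b).symm
      _ = ((S⁻¹ * GammaMat a * S) * (S⁻¹ * GammaMat b * S)).trace := htr2.symm
      _ = ((∑ k : Fin 5, Omat5 S k a • GammaMat k)
            * (∑ l : Fin 5, Omat5 S l b • GammaMat l)).trace := by rw [conj a, conj b]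
      _ = ∑ k : Fin 5, ∑ l : Fin 5, Omat5 S k a * Omat5 S l b * (4 * eta5Mat k l) := by
        rw [Finset.sum_mul_sum]
        rw [Matrix.trace_sum]
        refine Finset.sum_congr rfl fun k _ => ?_
        rw [Matrix.trace_sum]
        refine Finset.sum_congr rfl fun l _ => ?_
        rw [smul_mul_assoc, mul_smul_comm, Matrix.trace_smul, Matrix.trace_smul,
          gtr, smul_eq_mul, smul_eq_mul]
        ring
  ext a b
  have hk := key a b
  have goal : ((Omat5 S)ᵀ * eta5Mat * Omat5 S) a b
      = ∑ l : Fin 5, ∑ k : Fin 5, Omat5 S k a * eta5Mat k l * Omat5 S l b := by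
    rw [Matrix.mul_apply]
    refine Finset.sum_congr rfl fun l _ => ?_
    rw [Matrix.mul_apply, Finset.sum_mul]
    refine Finset.sum_congr rfl fun k _ => ?_
    rw [Matrix.transpose_apply]
  rw [goal, Finset.sum_comm]
  have h4 : (4:ℝ) * eta5Mat a b
      = 4 * ∑ k : Fin 5, ∑ l : Fin 5, Omat5 S k a * eta5Mat k l * Omat5 S l b := by
    rw [hk, Finset.mul_sum]
    refine Finset.sum_congr rfl fun k _ => ?_
    rw [Finset.mul_sum]
    refine Finset.sum_congr rfl fun l _ => ?_
    ring
  have := mul_left_cancel₀ (by norm_num : (4:ℝ) ≠ 0) h4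
  linarith [this]
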